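/- Let M ≥ 2 be an integer, X_M = {exp(2πi(t−1)/M) : t = 1,…,M} ⊂ ℂ, and γ1, γ2 > 0. Fix x1 ∈ X_M. Then the minimum of γ1·Re(1 − conj(x1)·xv) + γ2·Re(1 − conj(xr)·xv) over all xv, xr ∈ X_M with xv ≠ x1 and xr ≠ x1 equals 2·γ1·sin²(π/M), and it is attained exactly when xr = xv and xv ∈ {x1·exp(2πi/M), x1·exp(−2πi/M)}. -/

import Mathlib

/-- The `M`-ary PSK alphabet `{exp(2πi(t-1)/M) : t = 1,…,M}`. -/
noncomputable def pskAlphabet (M : ℕ) : Set ℂ :=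
  {z | ∃ t : Fin M, z = Complex.exp (2 * Real.pi * Complex.I * ((t : ℕ) : ℂ) / (M : ℂ))}

/-- Problem (P2.2): the minimum of `γ1·Re(1 - conj(x1)·xv) + γ2·Re(1 - conj(xr)·xv)`
over `xv, xr ∈ X_M` with `xv ≠ x1`, `xr ≠ x1` equals `2γ1 sin²(π/M)`, attained exactly
when `xr = xv` and `xv` is a nearest neighbor of `x1`. -/

noncomputable def pskF (M : ℕ) (k : ℤ) : ℂ :=
  Complex.exp (2 * Real.pi * Complex.I * (k : ℂ) / (M : ℂ))

lemma pskF_re (M : ℕ) (k : ℤ) :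
    (pskF M k).re = Real.cos (2 * Real.pi * (k : ℝ) / (M : ℝ)) := by
  have h : (2 : ℂ) * Real.pi * Complex.I * (k : ℂ) / (M : ℂ)
      = ((2 * Real.pi * (k : ℝ) / (M : ℝ) : ℝ) : ℂ) * Complex.I := by
    push_cast; ring
  rw [pskF, h, Complex.exp_ofReal_mul_I_re]

lemma pskF_eq_one_iff (M : ℕ) (hM : 0 < M) (k : ℤ) :
    pskF M k = 1 ↔ (M : ℤ) ∣ k := by
  rw [pskF, Complex.exp_eq_one_iff]
  constructor
  · rintro ⟨n, hn⟩
    refine ⟨n, ?_⟩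
    have hM0 : (M : ℂ) ≠ 0 := Nat.cast_ne_zero.mpr hM.ne'
    have hpi : (Real.pi : ℂ) ≠ 0 := by
      exact_mod_cast Real.pi_ne_zero
    have h2 : (2 : ℂ) * Real.pi * Complex.I ≠ 0 := by
      simp [Complex.I_ne_zero, hpi]
    field_simp at hn
    have : (k : ℂ) = (M : ℂ) * n := mul_left_cancel₀ h2 (by linear_combination (2 * Real.pi * Complex.I) * hn)
    exact_mod_cast this
  · rintro ⟨n, rfl⟩
    refine ⟨n, ?_⟩
    have hM0 : (M : ℂ) ≠ 0 := Nat.cast_ne_zero.mpr hM.ne'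
    field_simp
    push_cast
    ring

lemma pskF_mul (M : ℕ) (j k : ℤ) : pskF M (j + k) = pskF M j * pskF M k := by
  rw [pskF, pskF, pskF, ← Complex.exp_add]
  congr 1
  push_cast
  ring

lemma pskF_ne_zero (M : ℕ) (k : ℤ) : pskF M k ≠ 0 := Complex.exp_ne_zero _

lemma pskF_eq_iff (M : ℕ) (hM : 0 < M) (j k : ℤ) :
    pskF M j = pskF M k ↔ (M : ℤ) ∣ j - k := by
  rw [← pskF_eq_one_iff M hM]
  constructor
  · intro h
    have := pskF_mul M (j - k) k
    rw [sub_add_cancel, h] at this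
    have h2 : pskF M (j - k) * pskF M k = 1 * pskF M k := by rw [one_mul, ← this]
    exact mul_right_cancel₀ (pskF_ne_zero M k) h2
  · intro h
    have := pskF_mul M (j - k) k
    rw [sub_add_cancel, h, one_mul] at this
    exact this

lemma pskF_conj (M : ℕ) (k : ℤ) :
    (starRingEnd ℂ) (pskF M k) = pskF M (-k) := by
  rw [pskF, pskF, ← Complex.exp_conj]
  congr 1
  simp only [map_div₀, map_mul, Complex.conj_I, Complex.conj_ofReal, map_ofNat,
    Complex.conj_natCast, map_intCast]
  push_cast
  ring

lemma sin_sq_sub_sin_sq (A B : ℝ) :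
    Real.sin A ^ 2 - Real.sin B ^ 2 = Real.sin (A + B) * Real.sin (A - B) := by
  rw [Real.sin_add, Real.sin_sub]
  nlinarith [Real.sin_sq_add_cos_sq A, Real.sin_sq_add_cos_sq B]

lemma psk_core (M : ℕ) (hM : 2 ≤ M) (r : ℤ) (h1 : 1 ≤ r) (h2 : r < M) :
    Real.sin (Real.pi / M) ^ 2 ≤ Real.sin (Real.pi * r / M) ^ 2 ∧
    (Real.sin (Real.pi * r / M) ^ 2 = Real.sin (Real.pi / M) ^ 2 ↔
      r = 1 ∨ r = (M : ℤ) - 1) := by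
  have hMR : (0:ℝ) < M := by positivity
  have hpi := Real.pi_pos
  have hrR : (1:ℝ) ≤ (r:ℝ) := by exact_mod_cast h1
  have hrR2 : (r:ℝ) < M := by exact_mod_cast h2
  have hu1 : 0 < Real.pi * (r + 1) / M := by positivity
  have hr3 : (r:ℝ) + 1 ≤ (M:ℝ) := by
    have : r + 1 ≤ (M:ℤ) := h2
    exact_mod_cast this
  have hu2 : Real.pi * ((r:ℝ) + 1) / M ≤ Real.pi := by
    rw [div_le_iff₀ hMR]
    nlinarith
  have hv1 : 0 ≤ Real.pi * ((r:ℝ) - 1) / M := by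
    apply div_nonneg _ hMR.le
    nlinarith
  have hv2 : Real.pi * ((r:ℝ) - 1) / M < Real.pi := by
    rw [div_lt_iff₀ hMR]
    nlinarith
  have hid : Real.sin (Real.pi * r / M) ^ 2 - Real.sin (Real.pi / M) ^ 2 =
      Real.sin (Real.pi * ((r:ℝ) + 1) / M) * Real.sin (Real.pi * ((r:ℝ) - 1) / M) := by
    have := sin_sq_sub_sin_sq (Real.pi * r / M) (Real.pi / M)
    rw [this]
    congr 2 <;> field_simp <;> ring
  have hsu : 0 ≤ Real.sin (Real.pi * ((r:ℝ) + 1) / M) :=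
    Real.sin_nonneg_of_nonneg_of_le_pi hu1.le hu2
  have hsv : 0 ≤ Real.sin (Real.pi * ((r:ℝ) - 1) / M) :=
    Real.sin_nonneg_of_nonneg_of_le_pi hv1 hv2.le
  constructor
  · nlinarith [mul_nonneg hsu hsv]
  · constructor
    · intro h
      have hprod : Real.sin (Real.pi * ((r:ℝ) + 1) / M) *
          Real.sin (Real.pi * ((r:ℝ) - 1) / M) = 0 := by linarith [hid, h.le, h.ge]
      rcases mul_eq_zero.mp hprod with h0 | h0
      · right
        have hupi : Real.pi * ((r:ℝ) + 1) / M = Real.pi := by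
          rcases lt_or_eq_of_le hu2 with h' | h'
          · exact absurd h0 (ne_of_gt (Real.sin_pos_of_pos_of_lt_pi hu1 h'))
          · exact h'
        rw [div_eq_iff (ne_of_gt hMR)] at hupi
        have h9 : (r:ℝ) + 1 = (M:ℝ) :=
          mul_left_cancel₀ Real.pi_ne_zero (by linear_combination hupi)
        have : (r:ℝ) = (M:ℝ) - 1 := by linarith
        exact_mod_cast this
      · left
        have := (Real.sin_eq_zero_iff_of_lt_of_lt (by linarith) hv2).mp h0
        rw [div_eq_zero_iff] at this
        have h9 : Real.pi * ((r:ℝ) - 1) = 0 := by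
          rcases this with h' | h'
          · exact h'
          · exact absurd h' (ne_of_gt hMR)
        have hr0 : (r:ℝ) - 1 = 0 := by
          rcases mul_eq_zero.mp h9 with h' | h'
          · exact absurd h' Real.pi_ne_zero
          · exact h'
        have : (r:ℝ) = 1 := by linarith
        exact_mod_cast this
    · rintro (rfl | hrm)
      · norm_num
      · have : (r:ℝ) = (M:ℝ) - 1 := by exact_mod_cast hrm
        rw [this]
        have harg : Real.pi * ((M:ℝ) - 1) / M = Real.pi - Real.pi / M := by
          field_simp
        rw [harg, Real.sin_pi_sub]

lemma sin_pi_mul_eq_zero_iff (M : ℕ) (hM : 0 < M) (k : ℤ) :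
    Real.sin (Real.pi * k / M) = 0 ↔ (M : ℤ) ∣ k := by
  have hMR : (0:ℝ) < M := by positivity
  rw [Real.sin_eq_zero_iff]
  constructor
  · rintro ⟨n, hn⟩
    refine ⟨n, ?_⟩
    rw [eq_div_iff (ne_of_gt hMR)] at hn
    have : (k:ℝ) = (M:ℝ) * n :=
      mul_left_cancel₀ Real.pi_ne_zero (by linear_combination -hn)
    exact_mod_cast this
  · rintro ⟨n, rfl⟩
    refine ⟨n, ?_⟩
    field_simp
    push_cast
    ring

lemma psk_main_k (M : ℕ) (hM : 2 ≤ M) (k : ℤ) (hk : ¬ (M:ℤ) ∣ k) :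
    Real.sin (Real.pi / M) ^ 2 ≤ Real.sin (Real.pi * k / M) ^ 2 ∧
    (Real.sin (Real.pi * k / M) ^ 2 = Real.sin (Real.pi / M) ^ 2 ↔
      (M:ℤ) ∣ (k - 1) ∨ (M:ℤ) ∣ (k + 1)) := by
  have hM0 : (0:ℤ) < M := by exact_mod_cast Nat.lt_of_lt_of_le Nat.zero_lt_two hM
  set r := k % (M:ℤ) with hr
  set q := k / (M:ℤ) with hq
  have hqr : (M:ℤ) * q + r = k := Int.mul_ediv_add_emod k M
  have hr0 : 0 ≤ r := Int.emod_nonneg k (ne_of_gt hM0)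
  have hrM : r < M := Int.emod_lt_of_pos k hM0
  have hrne : r ≠ 0 := by
    intro h
    exact hk (Int.dvd_of_emod_eq_zero h)
  have hr1 : 1 ≤ r := by omega
  have hMR : (0:ℝ) < M := by positivity
  -- sin(πk/M)² = sin(πr/M)²
  have hsq : Real.sin (Real.pi * k / M) ^ 2 = Real.sin (Real.pi * r / M) ^ 2 := by
    have harg : Real.pi * (k:ℝ) / M = Real.pi * (r:ℝ) / M + (q:ℝ) * Real.pi := by
      have : (k:ℝ) = (M:ℝ) * q + r := by exact_mod_cast hqr.symm
      rw [this]; field_simp; ring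
    rw [harg, Real.sin_add_int_mul_pi, mul_pow]
    have h1 : ((-1:ℝ)^q)^2 = (-1:ℝ)^(2*q) := by
      rw [two_mul, zpow_add₀ (by norm_num : (-1:ℝ) ≠ 0), sq]
    have h2 : ((-1:ℝ))^(2*q) = 1 := Even.neg_one_zpow ⟨q, by ring⟩
    rw [h1, h2, one_mul]
  have hcore := psk_core M hM r hr1 hrM
  have hd1 : (M:ℤ) ∣ (k - 1) ↔ r = 1 := by
    have hk1 : k - 1 = (M:ℤ) * q + (r - 1) := by omega
    rw [hk1]
    rw [dvd_add_right ⟨q, rfl⟩]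
    constructor
    · intro h
      have := Int.emod_emod_of_dvd (r - 1) (dvd_refl (M:ℤ))
      have hmod : (r - 1) % M = 0 := Int.emod_eq_zero_of_dvd h
      rw [Int.emod_eq_of_lt (by omega) (by omega)] at hmod
      omega
    · intro h
      rw [h]; simp
  have hd2 : (M:ℤ) ∣ (k + 1) ↔ r = (M:ℤ) - 1 := by
    have hk1 : k + 1 = (M:ℤ) * q + (r + 1) := by omega
    rw [hk1]
    rw [dvd_add_right ⟨q, rfl⟩]
    constructor
    · intro h
      have := Int.le_of_dvd (by omega) h
      omega
    · intro h
      rw [h]; simp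
  rw [hsq, hd1, hd2]
  exact hcore

lemma mem_pskAlphabet_iff (M : ℕ) (x : ℂ) :
    x ∈ pskAlphabet M ↔ ∃ t : Fin M, x = pskF M ((t : ℕ) : ℤ) := by
  unfold pskAlphabet pskF
  constructor <;> rintro ⟨t, rfl⟩ <;> refine ⟨t, ?_⟩ <;> congr 1 <;> push_cast <;> ring

lemma re_term (M : ℕ) (a b : ℤ) :
    (1 - (starRingEnd ℂ) (pskF M a) * pskF M b).re
      = 2 * Real.sin (Real.pi * ((b - a : ℤ) : ℝ) / M) ^ 2 := by
  rw [pskF_conj, ← pskF_mul]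
  have h : -a + b = b - a := by ring
  rw [h, Complex.sub_re, Complex.one_re, pskF_re]
  have hs := Real.sin_sq_eq_half_sub (Real.pi * ((b - a : ℤ) : ℝ) / M)
  have harg : 2 * (Real.pi * ((b - a : ℤ) : ℝ) / M)
      = 2 * Real.pi * ((b - a : ℤ) : ℝ) / M := by ring
  rw [harg] at hs
  linarith

lemma pskF_succ (M : ℕ) (a : ℤ) :
    pskF M (a + 1) = pskF M a * Complex.exp (2 * Real.pi * Complex.I / (M : ℂ)) := by
  rw [pskF_mul]
  congr 1
  unfold pskF
  congr 1
  push_cast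
  ring

lemma pskF_pred (M : ℕ) (a : ℤ) :
    pskF M (a - 1) = pskF M a * Complex.exp (-(2 * Real.pi * Complex.I) / (M : ℂ)) := by
  have : a - 1 = a + (-1) := by ring
  rw [this, pskF_mul]
  congr 1
  unfold pskF
  congr 1
  push_cast
  ring

theorem psk_erroneous_relaying_min_P22 (M : ℕ) (hM : 2 ≤ M) (γ1 γ2 : ℝ)
    (hγ1 : 0 < γ1) (hγ2 : 0 < γ2) (x1 : ℂ) (hx1 : x1 ∈ pskAlphabet M) :
    ∀ xv ∈ pskAlphabet M, ∀ xr ∈ pskAlphabet M, xv ≠ x1 → xr ≠ x1 →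
      (2 * γ1 * Real.sin (Real.pi / M) ^ 2 ≤
        γ1 * (1 - (starRingEnd ℂ) x1 * xv).re + γ2 * (1 - (starRingEnd ℂ) xr * xv).re) ∧
      (γ1 * (1 - (starRingEnd ℂ) x1 * xv).re + γ2 * (1 - (starRingEnd ℂ) xr * xv).re =
          2 * γ1 * Real.sin (Real.pi / M) ^ 2 ↔
        xr = xv ∧
          (xv = x1 * Complex.exp (2 * Real.pi * Complex.I / (M : ℂ)) ∨
           xv = x1 * Complex.exp (-(2 * Real.pi * Complex.I) / (M : ℂ)))) := by
  intro xv hxv xr hxr hvne hrne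
  have hM0 : 0 < M := lt_of_lt_of_le Nat.zero_lt_two hM
  obtain ⟨a, ha⟩ := (mem_pskAlphabet_iff M x1).mp hx1
  obtain ⟨b, hb⟩ := (mem_pskAlphabet_iff M xv).mp hxv
  obtain ⟨c, hc⟩ := (mem_pskAlphabet_iff M xr).mp hxr
  subst ha hb hc
  have hk1 : ¬ (M:ℤ) ∣ (((b:ℕ):ℤ) - ((a:ℕ):ℤ)) := by
    intro h
    exact hvne ((pskF_eq_iff M hM0 _ _).mpr h)
  rw [re_term M ((a:ℕ):ℤ) ((b:ℕ):ℤ), re_term M ((c:ℕ):ℤ) ((b:ℕ):ℤ)]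
  obtain ⟨hineq, heq⟩ := psk_main_k M hM _ hk1
  set s1 := Real.sin (Real.pi * ((((b:ℕ):ℤ) - ((a:ℕ):ℤ) : ℤ) : ℝ) / M) ^ 2 with hs1
  set s2 := Real.sin (Real.pi * ((((b:ℕ):ℤ) - ((c:ℕ):ℤ) : ℤ) : ℝ) / M) ^ 2 with hs2
  have hs2nn : 0 ≤ s2 := sq_nonneg _
  have hxv1 : (pskF M ((b:ℕ):ℤ) = pskF M ((a:ℕ):ℤ) *
        Complex.exp (2 * Real.pi * Complex.I / (M : ℂ))) ↔
      (M:ℤ) ∣ (((b:ℕ):ℤ) - ((a:ℕ):ℤ) - 1) := by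
    rw [← pskF_succ, pskF_eq_iff M hM0]
    constructor <;> intro h <;> [skip; skip] <;>
      · have h' := h
        convert h' using 1
        ring
  have hxv2 : (pskF M ((b:ℕ):ℤ) = pskF M ((a:ℕ):ℤ) *
        Complex.exp (-(2 * Real.pi * Complex.I) / (M : ℂ))) ↔
      (M:ℤ) ∣ (((b:ℕ):ℤ) - ((a:ℕ):ℤ) + 1) := by
    rw [← pskF_pred, pskF_eq_iff M hM0]
    constructor <;> intro h <;>
      · have h' := h
        convert h' using 1
        ring
  have hxrv : (pskF M ((c:ℕ):ℤ) = pskF M ((b:ℕ):ℤ)) ↔ s2 = 0 := by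
    rw [pskF_eq_iff M hM0, hs2, sq_eq_zero_iff, sin_pi_mul_eq_zero_iff M hM0]
    exact (dvd_sub_comm).symm
  constructor
  · nlinarith
  · constructor
    · intro h
      have h1 : s1 = Real.sin (Real.pi / M) ^ 2 := by nlinarith
      have h2 : s2 = 0 := by nlinarith
      refine ⟨hxrv.mpr h2, ?_⟩
      rcases heq.mp h1 with hd | hd
      · exact Or.inl (hxv1.mpr hd)
      · exact Or.inr (hxv2.mpr hd)
    · rintro ⟨hrv, hnb⟩
      have h2 : s2 = 0 := hxrv.mp hrv
      have h1 : s1 = Real.sin (Real.pi / M) ^ 2 := by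
        apply heq.mpr
        rcases hnb with hd | hd
        · exact Or.inl (hxv1.mp hd)
        · exact Or.inr (hxv2.mp hd)
      rw [h1, h2]
      ring
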